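/- The number of tuples (a₁,…,aₙ) of nonnegative integers with ∑ᵢ aᵢ ≤ ⌈n·N_S⌉ is at most 2^{n[g(N_S) + δ]}, where g(x) = (x+1)·log₂(x+1) − x·log₂(x) and δ ≥ (1/n)·(log₂ e + log₂(1 + 1/N_S)), for any real N_S > 0 and positive integer n. -/

import Mathlib

/-- The entropy of a bosonic thermal state with mean photon number `x`:
`g(x) = (x+1)·log₂(x+1) − x·log₂ x`. -/
noncomputable def gthermal (x : ℝ) : ℝ :=
  (x + 1) * Real.logb 2 (x + 1) - x * Real.logb 2 x

private lemma philog {a b : ℝ} (ha : 0 < a) (hb : 0 < b) :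
    (b - a) * (Real.log a + 1) ≤ b * Real.log b - a * Real.log a := by
  have h := Real.log_le_sub_one_of_pos (div_pos ha hb)
  rw [Real.log_div ha.ne' hb.ne'] at h
  have h2 : b * (Real.log a - Real.log b) ≤ b * (a / b - 1) :=
    mul_le_mul_of_nonneg_left h hb.le
  have h3 : b * (a / b - 1) = a - b := by field_simp
  nlinarith [h2]

/-- Stars and bars upper bound: #{a : Fin n → ℕ | ∑ a ≤ k} ≤ C(n+k, k). -/
private lemma card_le_choose (n k : ℕ) :
    Nat.card {a : Fin n → ℕ // ∑ i, a i ≤ k} ≤ (n + k).choose k := by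
  classical
  set f : {a : Fin n → ℕ // ∑ i, a i ≤ k} → Sym (Fin (n + 1)) k :=
    fun a => ⟨(∑ i : Fin n, (a.1 i) • {(i.succ : Fin (n + 1))})
        + (k - ∑ i, a.1 i) • ({0} : Multiset (Fin (n + 1))), by
      have hs := a.2
      rw [Multiset.card_add, Multiset.card_sum]
      simp only [Multiset.card_nsmul, Multiset.card_singleton, mul_one, smul_eq_mul]
      omega⟩ with hf
  have hcount : ∀ (a : {a : Fin n → ℕ // ∑ i, a i ≤ k}) (i : Fin n),
      Multiset.count (i.succ) (f a).1 = a.1 i := by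
    intro a i
    simp only [hf, Multiset.count_add, Multiset.count_nsmul, Multiset.count_sum',
      Multiset.count_singleton]
    rw [Finset.sum_eq_single i]
    · simp [Fin.succ_ne_zero i]
    · intro j _ hj
      have : (i.succ : Fin (n + 1)) ≠ j.succ := by
        simp [Fin.succ_inj, hj.symm]
      simp [this]
    · simp
  have hinj : Function.Injective f := by
    intro a b hab
    ext i
    have := hcount a i
    rw [hab, hcount b i] at this
    exact this.symm
  calc Nat.card {a : Fin n → ℕ // ∑ i, a i ≤ k}
      ≤ Nat.card (Sym (Fin (n + 1)) k) := Nat.card_le_card_of_injective f hinj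
    _ = (n + k).choose k := by
        rw [Nat.card_eq_fintype_card, Sym.card_sym_eq_choose]
        simp

/-- Binomial bound: C(n+k, k) ≤ ((n+k)/n)^n ((n+k)/k)^k. -/
private lemma choose_le_pow (n k : ℕ) (hn : 0 < n) (hk : 0 < k) :
    (((n + k).choose k : ℕ) : ℝ)
      ≤ (((n : ℝ) + k) / n) ^ n * (((n : ℝ) + k) / k) ^ k := by
  have hN : (0 : ℝ) < (n : ℝ) + k := by positivity
  have hp : (0 : ℝ) < (k : ℝ) / ((n : ℝ) + k) := by positivity
  have hq : (0 : ℝ) < (n : ℝ) / ((n : ℝ) + k) := by positivity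
  have hpq : (k : ℝ) / ((n : ℝ) + k) + (n : ℝ) / ((n : ℝ) + k) = 1 := by
    field_simp
    ring
  have hexp := add_pow ((k : ℝ) / ((n : ℝ) + k)) ((n : ℝ) / ((n : ℝ) + k)) (n + k)
  rw [hpq, one_pow] at hexp
  have hmem : k ∈ Finset.range (n + k + 1) := by
    simp
  have hterm : ((k : ℝ) / ((n : ℝ) + k)) ^ k * ((n : ℝ) / ((n : ℝ) + k)) ^ (n + k - k)
        * ((n + k).choose k : ℝ) ≤ 1 := by
    rw [hexp]
    refine Finset.single_le_sum
      (f := fun m => ((k : ℝ) / ((n : ℝ) + k)) ^ m * ((n : ℝ) / ((n : ℝ) + k)) ^ (n + k - m)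
        * ((n + k).choose m : ℝ)) (fun i _ => by positivity) hmem
  have hnk : n + k - k = n := by omega
  rw [hnk] at hterm
  have hApos : (0 : ℝ) < ((k : ℝ) / ((n : ℝ) + k)) ^ k * ((n : ℝ) / ((n : ℝ) + k)) ^ n := by
    positivity
  rw [mul_comm, ← le_div_iff₀ hApos] at hterm
  calc (((n + k).choose k : ℕ) : ℝ)
      ≤ 1 / (((k : ℝ) / ((n : ℝ) + k)) ^ k * ((n : ℝ) / ((n : ℝ) + k)) ^ n) := hterm
    _ = (((n : ℝ) + k) / n) ^ n * (((n : ℝ) + k) / k) ^ k := by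
        rw [one_div, mul_inv, ← inv_pow, ← inv_pow, inv_div, inv_div]
        ring

set_option maxHeartbeats 1000000 in
/-- The number of tuples `(a₁,…,aₙ)` of nonnegative integers with
`∑ i, a i ≤ ⌈n·N_S⌉` is at most `2^(n(g(N_S)+δ))`, provided
`δ ≥ (1/n)(log₂ e + log₂(1 + 1/N_S))`. -/
theorem photon_number_projector_rank_bound
    (n : ℕ) (hn : 0 < n) (NS : ℝ) (hNS : 0 < NS) (δ : ℝ)
    (hδ : δ ≥ (1 / (n : ℝ)) * (Real.logb 2 (Real.exp 1) + Real.logb 2 (1 + 1 / NS))) :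
    (Nat.card {a : Fin n → ℕ // ∑ i, a i ≤ ⌈(n : ℝ) * NS⌉₊} : ℝ)
      ≤ (2 : ℝ) ^ ((n : ℝ) * (gthermal NS + δ)) := by
  classical
  set k : ℕ := ⌈(n : ℝ) * NS⌉₊ with hk
  have hnR : (0 : ℝ) < (n : ℝ) := by exact_mod_cast hn
  have hkpos : 0 < k := by
    rw [hk]
    exact Nat.ceil_pos.mpr (by positivity)
  have hkR : (0 : ℝ) < (k : ℝ) := by exact_mod_cast hkpos
  have hkc : (n : ℝ) * NS ≤ (k : ℝ) := by rw [hk]; exact Nat.le_ceil _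
  have hkc2 : (k : ℝ) < (n : ℝ) * NS + 1 := by
    rw [hk]; exact Nat.ceil_lt_add_one (by positivity)
  clear_value k
  -- x = k / n
  set x : ℝ := (k : ℝ) / n with hxdef
  clear_value x
  have hx : 0 < x := by rw [hxdef]; positivity
  have hxNS : NS ≤ x := by
    rw [hxdef, le_div_iff₀ hnR]
    calc NS * n = (n : ℝ) * NS := by ring
      _ ≤ (k : ℝ) := hkc
  have hxup : x ≤ NS + 1 / n := by
    rw [hxdef, div_le_iff₀ hnR]
    have h2 : (NS + 1 / n) * n = n * NS + 1 := by field_simp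
    linarith [hkc2]
  set d : ℝ := x - NS with hd
  clear_value d
  have hd0 : 0 ≤ d := by rw [hd]; linarith
  have hdn : d ≤ 1 / n := by rw [hd]; linarith
  have hn1 : (1 : ℝ) / n ≤ 1 := by
    rw [div_le_one hnR]; exact_mod_cast hn
  -- natural-log version of gthermal
  set F : ℝ → ℝ := fun t => (t + 1) * Real.log (t + 1) - t * Real.log t with hF
  clear_value F
  have hlog2 : (0 : ℝ) < Real.log 2 := Real.log_pos (by norm_num)
  -- Step A: card ≤ choose
  have stepA : (Nat.card {a : Fin n → ℕ // ∑ i, a i ≤ k} : ℝ) ≤ ((n + k).choose k : ℝ) := by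
    exact_mod_cast card_le_choose n k
  -- Step B: choose ≤ (x+1)^n * ((x+1)/x)^k
  have stepB : (((n + k).choose k : ℕ) : ℝ) ≤ (x + 1) ^ n * ((x + 1) / x) ^ k := by
    have h := choose_le_pow n k hn hkpos
    have e1 : ((n : ℝ) + k) / n = x + 1 := by
      rw [hxdef]; field_simp; ring
    have e2 : ((n : ℝ) + k) / k = (x + 1) / x := by
      rw [hxdef]; field_simp; ring
    rwa [e1, e2] at h
  -- rewrite step B bound as exp (n * F x)
  have stepB' : (x + 1) ^ n * ((x + 1) / x) ^ k = Real.exp ((n : ℝ) * F x) := by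
    have hx1 : (0 : ℝ) < x + 1 := by linarith
    have hpos : (0 : ℝ) < (x + 1) ^ n * ((x + 1) / x) ^ k :=
      mul_pos (pow_pos hx1 n) (pow_pos (div_pos hx1 hx) k)
    rw [← Real.exp_log hpos]
    congr 1
    rw [Real.log_mul (pow_pos hx1 n).ne' (pow_pos (div_pos hx1 hx) k).ne',
      Real.log_pow, Real.log_pow, Real.log_div hx1.ne' hx.ne']
    have hkx : (k : ℝ) = n * x := by rw [hxdef]; field_simp
    rw [hkx]
    simp only [hF]
    ring
  -- Step C: n * F x ≤ n * F NS + 1 + (log (NS+1) - log NS)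
  set L : ℝ := Real.log (NS + 1) - Real.log NS with hL
  clear_value L
  have hL0 : 0 ≤ L := by
    rw [hL, sub_nonneg]
    exact Real.log_le_log hNS (by linarith)
  have stepC : (n : ℝ) * F x ≤ (n : ℝ) * F NS + 1 + L := by
    have hNS1 : (0 : ℝ) < NS + 1 := by linarith
    have hx1 : (0 : ℝ) < x + 1 := by linarith
    -- lower convexity bound for t log t part
    have hlow : (x - NS) * (Real.log NS + 1) ≤ x * Real.log x - NS * Real.log NS :=
      philog hNS hx
    -- upper bound for (t+1) log (t+1) part
    have hup : (x + 1) * Real.log (x + 1) - (NS + 1) * Real.log (NS + 1)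
        ≤ (x - NS) * (Real.log (x + 1) + 1) := by
      have := philog hx1 hNS1
      have h : (x + 1) - (NS + 1) = x - NS := by ring
      nlinarith [this]
    -- log (x+1) ≤ log (NS+1) + d
    have hlogx1 : Real.log (x + 1) ≤ Real.log (NS + 1) + d := by
      have hq : (0 : ℝ) < (x + 1) / (NS + 1) := div_pos hx1 hNS1
      have h := Real.log_le_sub_one_of_pos hq
      rw [Real.log_div hx1.ne' hNS1.ne'] at h
      have : (x + 1) / (NS + 1) - 1 = d / (NS + 1) := by
        rw [hd]; field_simp; ring
      rw [this] at h
      have hdd : d / (NS + 1) ≤ d := by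
        rw [div_le_iff₀ hNS1]
        nlinarith
      linarith
    -- combine: F x - F NS ≤ d * (log (x+1) - log NS) ≤ d * (L + d)
    have hFd : F x - F NS ≤ d * (Real.log (x + 1) - Real.log NS) := by
      simp only [hF, hd]
      linarith [hlow, hup]
    have hFd2 : F x - F NS ≤ d * (L + d) := by
      have : Real.log (x + 1) - Real.log NS ≤ L + d := by
        rw [hL]; linarith
      calc F x - F NS ≤ d * (Real.log (x + 1) - Real.log NS) := hFd
        _ ≤ d * (L + d) := by
            apply mul_le_mul_of_nonneg_left this hd0
    -- multiply by n : n * (F x - F NS) ≤ n*d*L + n*d*d ≤ L + 1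
    have hnd : (n : ℝ) * d ≤ 1 := by
      calc (n : ℝ) * d ≤ (n : ℝ) * (1 / n) := mul_le_mul_of_nonneg_left hdn hnR.le
        _ = 1 := by field_simp
    have hd1 : d ≤ 1 := le_trans hdn hn1
    have h5 : (n : ℝ) * (F x - F NS) ≤ (n : ℝ) * (d * (L + d)) :=
      mul_le_mul_of_nonneg_left hFd2 hnR.le
    have h6 : (n : ℝ) * (d * (L + d)) = ((n : ℝ) * d) * L + ((n : ℝ) * d) * d := by ring
    have h7 : ((n : ℝ) * d) * L ≤ 1 * L := mul_le_mul_of_nonneg_right hnd hL0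
    have h8 : ((n : ℝ) * d) * d ≤ 1 * d := mul_le_mul_of_nonneg_right hnd hd0
    linarith [h5, h6, h7, h8, hd1]
  -- Step D: n * F NS + 1 + L ≤ (n * (gthermal NS + δ)) * log 2
  have stepD : (n : ℝ) * F NS + 1 + L ≤ ((n : ℝ) * (gthermal NS + δ)) * Real.log 2 := by
    have hg : gthermal NS * Real.log 2 = F NS := by
      simp only [gthermal, hF, Real.logb]
      field_simp
    have hδ' : (n : ℝ) * δ * Real.log 2 ≥ 1 + L := by
      have h1 : Real.logb 2 (Real.exp 1) * Real.log 2 = 1 := by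
        rw [Real.logb, Real.log_exp]
        field_simp
      have h2 : Real.logb 2 (1 + 1 / NS) * Real.log 2 = L := by
        rw [Real.logb, hL]
        have : 1 + 1 / NS = (NS + 1) / NS := by field_simp
        rw [this, Real.log_div (by linarith) hNS.ne']
        field_simp
      have hδn : (n : ℝ) * δ ≥ Real.logb 2 (Real.exp 1) + Real.logb 2 (1 + 1 / NS) := by
        have h := mul_le_mul_of_nonneg_left hδ hnR.le
        rw [← mul_assoc, mul_one_div, div_self hnR.ne', one_mul] at h
        exact h
      calc (n : ℝ) * δ * Real.log 2
          ≥ (Real.logb 2 (Real.exp 1) + Real.logb 2 (1 + 1 / NS)) * Real.log 2 := by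
            apply mul_le_mul_of_nonneg_right hδn hlog2.le
        _ = 1 + L := by rw [add_mul, h1, h2]
    have : ((n : ℝ) * (gthermal NS + δ)) * Real.log 2
        = (n : ℝ) * (gthermal NS * Real.log 2) + (n : ℝ) * δ * Real.log 2 := by ring
    rw [this, hg]
    linarith
  -- finish
  have h2rw : (2 : ℝ) ^ ((n : ℝ) * (gthermal NS + δ))
      = Real.exp (((n : ℝ) * (gthermal NS + δ)) * Real.log 2) := by
    rw [Real.rpow_def_of_pos (by norm_num), mul_comm]
  calc (Nat.card {a : Fin n → ℕ // ∑ i, a i ≤ k} : ℝ)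
      ≤ ((n + k).choose k : ℝ) := stepA
    _ ≤ (x + 1) ^ n * ((x + 1) / x) ^ k := stepB
    _ = Real.exp ((n : ℝ) * F x) := stepB'
    _ ≤ Real.exp (((n : ℝ) * (gthermal NS + δ)) * Real.log 2) := by
        apply Real.exp_le_exp.mpr
        linarith [stepC, stepD]
    _ = (2 : ℝ) ^ ((n : ℝ) * (gthermal NS + δ)) := h2rw.symm
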